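/- arXiv:2505.14388 — 2 statements merged into one kernel-verified Lean document; each statement's English description precedes it below -/
import Mathlib

section
/- (Plackett's identity) For ρ ∈ (−1,1), the partial derivative of the standard bivariate normal CDF with respect to the correlation satisfies ∂Φ₂(a,b;ρ)/∂ρ = φ₂(a,b;ρ). -/
open Real MeasureTheory Set Matrix

/-- standard normal density -/
noncomputable def phi (x : ℝ) : ℝ := Real.exp (-x^2/2) / Real.sqrt (2*Real.pi)

/-- standard normal CDF -/
noncomputable def Phi (x : ℝ) : ℝ := ∫ t in Set.Iic x, phi t

/-- standard normal survival function -/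
noncomputable def PhiBar (x : ℝ) : ℝ := ∫ t in Set.Ioi x, phi t

/-- standard bivariate normal density with correlation ρ -/
noncomputable def phi2 (x y ρ : ℝ) : ℝ :=
  Real.exp (-(x^2 - 2*ρ*x*y + y^2)/(2*(1-ρ^2))) / (2*Real.pi*Real.sqrt (1-ρ^2))

/-- standard bivariate normal CDF with correlation ρ -/
noncomputable def Phi2 (a b ρ : ℝ) : ℝ := ∫ x in Set.Iic a, ∫ y in Set.Iic b, phi2 x y ρ

/-- standard bivariate normal joint survival function with correlation ρ -/
noncomputable def PhiBar2 (a b ρ : ℝ) : ℝ := ∫ x in Set.Ioi a, ∫ y in Set.Ioi b, phi2 x y ρ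

/-- covariance matrix of (Q, Q^S, Q^H) -/
noncomputable def covM (θS θH θ : ℝ) : Matrix (Fin 3) (Fin 3) ℝ :=
  !![1, θS, θH; θS, 1, θ; θH, θ, 1]

/-- trivariate normal density of (Q, Q^S, Q^H) with zero means, unit variances and
correlations θS = Corr(Q,Q^S), θH = Corr(Q,Q^H), θ = Corr(Q^S,Q^H) -/
noncomputable def pdf3 (θS θH θ : ℝ) (v : Fin 3 → ℝ) : ℝ :=
  Real.exp (-(v ⬝ᵥ ((covM θS θH θ)⁻¹ *ᵥ v))/2) /
    Real.sqrt ((2*Real.pi)^3 * (covM θS θH θ).det)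


section PlackettProof

open Filter Topology

/-- partial derivative of `phi2` in the first variable -/
noncomputable def PD (x y r : ℝ) : ℝ := phi2 x y r * ((r*y - x)/(1 - r^2))

/-- partial derivative of `phi2` in the correlation (also `∂y PD`) -/
noncomputable def DD (x y r : ℝ) : ℝ :=
  phi2 x y r * ((r*x - y)*(r*y - x)/(1-r^2)^2 + r/(1-r^2))


lemma hasDerivAt_phi2_x (y r : ℝ) (hr : 0 < 1 - r^2) (x : ℝ) :
    HasDerivAt (fun x => phi2 x y r) (PD x y r) x := by
  have hs : (1 - r^2) ≠ 0 := ne_of_gt hr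
  have hE : HasDerivAt (fun x : ℝ => -(x^2 - 2*r*x*y + y^2)/(2*(1-r^2)))
      ((r*y - x)/(1 - r^2)) x := by
    have h1 : HasDerivAt (fun x : ℝ => -(x^2 - 2*r*x*y + y^2))
        (-(2*x - 2*r*y)) x := by
      have := (((hasDerivAt_pow 2 x).sub (((hasDerivAt_id x).const_mul (2*r)).mul_const y)).add_const (y^2)).neg
      refine this.congr_deriv ?_
      ring
    have := h1.div_const (2*(1-r^2))
    refine this.congr_deriv ?_
    field_simp
    ring
  have := ((hE.exp).div_const (2*Real.pi*Real.sqrt (1-r^2)))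
  refine this.congr_deriv ?_
  unfold PD phi2
  ring

lemma hasDerivAt_phi2_y (x r : ℝ) (hr : 0 < 1 - r^2) (y : ℝ) :
    HasDerivAt (fun y => phi2 x y r) (phi2 x y r * ((r*x - y)/(1 - r^2))) y := by
  have hs : (1 - r^2) ≠ 0 := ne_of_gt hr
  have hE : HasDerivAt (fun y : ℝ => -(x^2 - 2*r*x*y + y^2)/(2*(1-r^2)))
      ((r*x - y)/(1 - r^2)) y := by
    have h1 : HasDerivAt (fun y : ℝ => -(x^2 - 2*r*x*y + y^2))
        (-(2*y - 2*r*x)) y := by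
      have heq : (fun y : ℝ => -(x^2 - 2*r*x*y + y^2)) = fun y : ℝ => 2*r*x*y - y^2 - x^2 := by
        funext t; ring
      rw [heq]
      have := (((hasDerivAt_id y).const_mul (2*r*x)).sub (hasDerivAt_pow 2 y)).sub_const (x^2)
      refine this.congr_deriv ?_
      simp
    have := h1.div_const (2*(1-r^2))
    refine this.congr_deriv ?_
    field_simp
    ring
  have := ((hE.exp).div_const (2*Real.pi*Real.sqrt (1-r^2)))
  refine this.congr_deriv ?_
  unfold phi2
  ring

lemma hasDerivAt_PD_y (x r : ℝ) (hr : 0 < 1 - r^2) (y : ℝ) :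
    HasDerivAt (fun y => PD x y r) (DD x y r) y := by
  have hs : (1 - r^2) ≠ 0 := ne_of_gt hr
  have h1 := hasDerivAt_phi2_y x r hr y
  have h2 : HasDerivAt (fun y : ℝ => (r*y - x)/(1 - r^2)) (r/(1-r^2)) y := by
    have := (((hasDerivAt_id y).const_mul r).sub_const x).div_const (1-r^2)
    refine this.congr_deriv ?_
    ring
  have := h1.mul h2
  refine this.congr_deriv ?_
  unfold DD
  field_simp

lemma hasDerivAt_phi2_r (x y r : ℝ) (hr : 0 < 1 - r^2) :
    HasDerivAt (fun r => phi2 x y r) (DD x y r) r := by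
  have hu : (1 - r^2) ≠ 0 := ne_of_gt hr
  have hspos : 0 < Real.sqrt (1 - r^2) := Real.sqrt_pos.mpr hr
  have hs : Real.sqrt (1 - r^2) ≠ 0 := ne_of_gt hspos
  have hss : Real.sqrt (1 - r^2)^2 = 1 - r^2 := Real.sq_sqrt hr.le
  -- exponent
  have hE : HasDerivAt (fun r : ℝ => -(x^2 - 2*r*x*y + y^2)/(2*(1-r^2)))
      ((x*y*(1+r^2) - r*(x^2+y^2))/(1-r^2)^2) r := by
    have hnum : HasDerivAt (fun r : ℝ => -(x^2 - 2*r*x*y + y^2)) (2*x*y) r := by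
      have heq : (fun r : ℝ => -(x^2 - 2*r*x*y + y^2)) = fun r : ℝ => 2*x*y*r - x^2 - y^2 := by
        funext t; ring
      rw [heq]
      have := (((hasDerivAt_id r).const_mul (2*x*y)).sub_const (x^2)).sub_const (y^2)
      refine this.congr_deriv ?_
      simp
    have hden : HasDerivAt (fun r : ℝ => 2*(1-r^2)) (-(4*r)) r := by
      have heq : (fun r : ℝ => 2*(1-r^2)) = fun r : ℝ => 2 - 2*r^2 := by funext t; ring
      rw [heq]
      have := ((hasDerivAt_pow 2 r).const_mul 2).const_sub 2
      refine this.congr_deriv ?_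
      simp; ring
    have hd2 : (2*(1-r^2)) ≠ 0 := by positivity
    have := hnum.div hden hd2
    refine this.congr_deriv ?_
    field_simp
    ring
  -- sqrt factor
  have hg : HasDerivAt (fun r : ℝ => 2*Real.pi*Real.sqrt (1-r^2))
      (2*Real.pi*(-r/Real.sqrt (1-r^2))) r := by
    have hin : HasDerivAt (fun r : ℝ => 1 - r^2) (-(2*r)) r := by
      have := (hasDerivAt_pow 2 r).const_sub 1
      refine this.congr_deriv ?_
      simp
    have := ((Real.hasDerivAt_sqrt hu).comp r hin).const_mul (2*Real.pi)
    refine this.congr_deriv ?_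
    field_simp
  have hgne : (2*Real.pi*Real.sqrt (1-r^2)) ≠ 0 := by positivity
  have := (hE.exp).div hg hgne
  refine this.congr_deriv ?_
  unfold DD phi2
  set s := Real.sqrt (1-r^2) with hsdef
  rw [← hss]
  have h2 : s ≠ 0 := hs
  field_simp
  ring

lemma tendsto_quad_atBot {A B C : ℝ} (hA : A < 0) :
    Tendsto (fun y : ℝ => A*y^2 + B*y + C) atBot atBot := by
  have hsq : Tendsto (fun y : ℝ => (y + B/(2*A))^2) atBot atTop := by
    have h1 : Tendsto (fun y : ℝ => -(y + B/(2*A))) atBot atTop := by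
      apply tendsto_neg_atBot_atTop.comp
      exact tendsto_atBot_add_const_right _ _ tendsto_id
    have h2 := (tendsto_pow_atTop (two_ne_zero)).comp h1
    refine h2.congr fun y => ?_
    simp only [Function.comp_apply]
    ring
  have h3 : Tendsto (fun y : ℝ => A*(y + B/(2*A))^2 + (C - B^2/(4*A))) atBot atBot := by
    apply tendsto_atBot_add_const_right
    exact (tendsto_const_mul_atBot_of_neg hA).mpr hsq
  refine h3.congr fun y => ?_
  have hA0 : A ≠ 0 := ne_of_lt hA
  field_simp
  ring

lemma tendsto_linear_mul_exp_quad (p q A B C : ℝ) (hA : A < 0) :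
    Tendsto (fun y : ℝ => (p + q*y) * Real.exp (A*y^2 + B*y + C)) atBot (𝓝 0) := by
  have hb : Tendsto (fun y : ℝ => y * Real.exp y) atBot (𝓝 0) := by
    have h := Real.tendsto_pow_mul_exp_neg_atTop_nhds_zero 1
    have h2 := (h.comp tendsto_neg_atBot_atTop).neg
    rw [neg_zero] at h2
    refine h2.congr fun y => ?_
    simp only [Function.comp_apply, pow_one]
    ring
  have h1 : Tendsto (fun y : ℝ => (p + q*y) * Real.exp y) atBot (𝓝 0) := by
    have := (Real.tendsto_exp_atBot.const_mul p).add (hb.const_mul q)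
    simp only [mul_zero, add_zero, mul_add, zero_add] at this
    refine this.congr fun y => ?_
    ring
  have h2 : Tendsto (fun y : ℝ => Real.exp (A*y^2 + (B-1)*y + C)) atBot (𝓝 0) :=
    Real.tendsto_exp_atBot.comp (tendsto_quad_atBot hA)
  have := h1.mul h2
  rw [mul_zero] at this
  refine this.congr fun y => ?_
  rw [mul_assoc, ← Real.exp_add]
  ring_nf

lemma integrable_one_add_sq_mul_exp {k : ℝ} (hk : 0 < k) :
    Integrable (fun y : ℝ => (1 + y^2) * Real.exp (-k*y^2)) := by
  have h1 := integrable_exp_neg_mul_sq hk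
  have h2 : Integrable (fun y : ℝ => y^2 * Real.exp (-k*y^2)) := by
    apply Integrable.mono' ((integrable_exp_neg_mul_sq (half_pos hk)).const_mul (2/k))
    · exact (Continuous.aestronglyMeasurable (by fun_prop))
    · refine Eventually.of_forall fun y => ?_
      have h := Real.add_one_le_exp ((k/2)*y^2)
      have hy : (k/2)*y^2 ≤ Real.exp ((k/2)*y^2) := by linarith
      have he : Real.exp ((k/2)*y^2) * Real.exp (-k*y^2) = Real.exp (-(k/2)*y^2) := by
        rw [← Real.exp_add]; ring_nf
      rw [Real.norm_eq_abs, abs_of_nonneg (by positivity)]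
      calc y^2 * Real.exp (-k*y^2) = (2/k) * (((k/2)*y^2) * Real.exp (-k*y^2)) := by
            field_simp
        _ ≤ (2/k) * (Real.exp ((k/2)*y^2) * Real.exp (-k*y^2)) := by
            apply mul_le_mul_of_nonneg_left _ (by positivity)
            exact mul_le_mul_of_nonneg_right hy (Real.exp_pos _).le
        _ = 2/k * Real.exp (-(k/2)*y^2) := by rw [he]
        _ = 2/k * Real.exp (-(k/2)*y^2) := rfl
  have h3 := h1.add h2
  refine h3.congr (Eventually.of_forall fun y => ?_)
  simp only [Pi.add_apply]
  ring

lemma phi2_nonneg (x y r : ℝ) : 0 ≤ phi2 x y r := by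
  unfold phi2
  positivity

lemma phi2_le {m t : ℝ} (hm1 : m < 1) (ht : |t| ≤ m) (x y : ℝ) :
    phi2 x y t ≤ Real.exp (-((1-m)/2) * x^2) * Real.exp (-((1-m)/2) * y^2)
      / (2*Real.pi*Real.sqrt (1-m^2)) := by
  have hm0 : 0 ≤ m := (abs_nonneg t).trans ht
  have ht1 : |t| < 1 := lt_of_le_of_lt ht hm1
  have htsq : t^2 ≤ m^2 := by
    have := abs_le.mp ht
    nlinarith [abs_nonneg t]
  have hu : 0 < 1 - t^2 := by nlinarith [sq_abs t, abs_nonneg t]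
  have hc : 0 < 1 - m^2 := by nlinarith
  have hQ : (1-m)*(x^2+y^2) ≤ x^2 - 2*t*x*y + y^2 := by
    have h1 := abs_le.mp ht
    nlinarith [mul_nonneg (by linarith : (0:ℝ) ≤ m + t) (sq_nonneg (x-y)),
      mul_nonneg (by linarith : (0:ℝ) ≤ m - t) (sq_nonneg (x+y))]
  have hexp : Real.exp (-(x^2 - 2*t*x*y + y^2)/(2*(1-t^2)))
      ≤ Real.exp (-((1-m)/2) * x^2) * Real.exp (-((1-m)/2) * y^2) := by
    rw [← Real.exp_add]
    apply Real.exp_le_exp.mpr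
    have hQ0 : 0 ≤ x^2 - 2*t*x*y + y^2 := le_trans (by nlinarith [sq_nonneg x, sq_nonneg y]) hQ
    have h2 : (x^2 - 2*t*x*y + y^2)/2 ≤ (x^2 - 2*t*x*y + y^2)/(2*(1-t^2)) := by
      apply div_le_div_of_nonneg_left hQ0 (by positivity)
      nlinarith
    have h3 : (1-m)*(x^2+y^2)/2 ≤ (x^2 - 2*t*x*y + y^2)/2 := by linarith
    rw [neg_div]
    linarith
  have hden : 2*Real.pi*Real.sqrt (1-m^2) ≤ 2*Real.pi*Real.sqrt (1-t^2) := by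
    have := Real.sqrt_le_sqrt (by linarith : 1 - m^2 ≤ 1 - t^2)
    nlinarith [Real.pi_pos]
  unfold phi2
  exact div_le_div₀ (by positivity) hexp (by positivity) hden

lemma abs_le_one_add_sq (x : ℝ) : |x| ≤ 1 + x^2 := by
  nlinarith [sq_nonneg (|x| - 1), sq_abs x, abs_nonneg x]

lemma PD_bound {m t : ℝ} (hm1 : m < 1) (ht : |t| ≤ m) (x y : ℝ) :
    |PD x y t| ≤ ((m*|y|+1) / ((1-m^2) * (2*Real.pi*Real.sqrt (1-m^2))))
      * ((1+x^2) * Real.exp (-((1-m)/2)*x^2)) := by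
  have hm0 : 0 ≤ m := (abs_nonneg t).trans ht
  have htsq : t^2 ≤ m^2 := by have := abs_le.mp ht; nlinarith [abs_nonneg t]
  have hc : 0 < 1 - m^2 := by nlinarith
  have hu : 0 < 1 - t^2 := by nlinarith
  have hS : 0 < Real.sqrt (1-m^2) := Real.sqrt_pos.mpr hc
  have hπ := Real.pi_pos
  have habs : |t*y - x| ≤ m*|y| + |x| := by
    calc |t*y - x| ≤ |t*y| + |x| := abs_sub _ _
      _ = |t| * |y| + |x| := by rw [abs_mul]
      _ ≤ m*|y| + |x| := by
          have := mul_le_mul_of_nonneg_right ht (abs_nonneg y); linarith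
  have key : m*|y| + |x| ≤ (m*|y|+1)*(1+x^2) := by
    have h1 := abs_le_one_add_sq x
    nlinarith [mul_nonneg hm0 (abs_nonneg y), sq_nonneg x,
      mul_nonneg (mul_nonneg hm0 (abs_nonneg y)) (sq_nonneg x)]
  calc |PD x y t| = phi2 x y t * (|t*y - x| / (1-t^2)) := by
        unfold PD
        rw [abs_mul, abs_of_nonneg (phi2_nonneg x y t), abs_div, abs_of_pos hu]
    _ ≤ (Real.exp (-((1-m)/2)*x^2) * Real.exp (-((1-m)/2)*y^2) / (2*Real.pi*Real.sqrt (1-m^2)))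
        * ((m*|y| + |x|) / (1-m^2)) := by
        gcongr
        · exact phi2_le hm1 ht x y
    _ ≤ (Real.exp (-((1-m)/2)*x^2) * 1 / (2*Real.pi*Real.sqrt (1-m^2)))
        * ((m*|y|+1)*(1+x^2) / (1-m^2)) := by
        gcongr
        · exact Real.exp_le_one_iff.mpr (by nlinarith [sq_nonneg y])
    _ = ((m*|y|+1) / ((1-m^2) * (2*Real.pi*Real.sqrt (1-m^2)))) * ((1+x^2) * Real.exp (-((1-m)/2)*x^2)) := by
        field_simp

lemma DD_bound {m t : ℝ} (hm1 : m < 1) (ht : |t| ≤ m) (x y : ℝ) :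
    |DD x y t| ≤ (((2*x^2+2)+m) / ((1-m^2)^2 * (2*Real.pi*Real.sqrt (1-m^2))))
      * ((1+y^2) * Real.exp (-((1-m)/2)*y^2)) := by
  have hm0 : 0 ≤ m := (abs_nonneg t).trans ht
  have htsq : t^2 ≤ m^2 := by have := abs_le.mp ht; nlinarith [abs_nonneg t]
  have hc : 0 < 1 - m^2 := by nlinarith
  have hu : 0 < 1 - t^2 := by nlinarith
  have hS : 0 < Real.sqrt (1-m^2) := Real.sqrt_pos.mpr hc
  have hπ := Real.pi_pos
  have habs : |(t*x - y)*(t*y - x)/(1-t^2)^2 + t/(1-t^2)|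
      ≤ (|x|+|y|)^2/(1-m^2)^2 + m/(1-m^2) := by
    have h1 : |(t*x - y)*(t*y - x)/(1-t^2)^2 + t/(1-t^2)|
        ≤ |(t*x - y)*(t*y - x)|/(1-t^2)^2 + |t|/(1-t^2) := by
      calc _ ≤ |(t*x - y)*(t*y - x)/(1-t^2)^2| + |t/(1-t^2)| := abs_add_le _ _
        _ = |(t*x - y)*(t*y - x)|/(1-t^2)^2 + |t|/(1-t^2) := by
            rw [abs_div, abs_div, abs_of_pos hu, abs_of_pos (by positivity : (0:ℝ) < (1-t^2)^2)]
    refine h1.trans ?_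
    have h2 : |(t*x - y)*(t*y - x)| ≤ (|x|+|y|)^2 := by
      rw [abs_mul]
      have e1 : |t*x - y| ≤ |x| + |y| := by
        calc |t*x - y| ≤ |t*x| + |y| := abs_sub _ _
          _ = |t| * |x| + |y| := by rw [abs_mul]
          _ ≤ |x| + |y| := by
              have h3 : |t| ≤ 1 := ht.trans hm1.le
              nlinarith [abs_nonneg x]
      have e2 : |t*y - x| ≤ |x| + |y| := by
        calc |t*y - x| ≤ |t*y| + |x| := abs_sub _ _
          _ = |t| * |y| + |x| := by rw [abs_mul]
          _ ≤ |x| + |y| := by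
              have h3 : |t| ≤ 1 := ht.trans hm1.le
              nlinarith [abs_nonneg y]
      calc |t*x - y| * |t*y - x| ≤ (|x|+|y|) * (|x|+|y|) :=
            mul_le_mul e1 e2 (abs_nonneg _) (by positivity)
        _ = (|x|+|y|)^2 := by ring
    gcongr
    all_goals first | exact h2 | exact ht | nlinarith
  have key : (|x|+|y|)^2/(1-m^2)^2 + m/(1-m^2) ≤ (((2*x^2+2)+m)/(1-m^2)^2) * (1+y^2) := by
    have h4 : (|x|+|y|)^2 ≤ (2*x^2+2)*(1+y^2) := by
      nlinarith [sq_nonneg (|x| - |y|), sq_abs x, sq_abs y, sq_nonneg x, sq_nonneg y,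
        mul_nonneg (sq_nonneg x) (sq_nonneg y)]
    have h5 : m/(1-m^2) ≤ (m/(1-m^2)^2) * (1+y^2) := by
      rw [div_mul_eq_mul_div, div_le_div_iff₀ hc (by positivity)]
      have : (1-m^2) ≤ 1 := by nlinarith
      nlinarith [sq_nonneg y, mul_nonneg hm0 (sq_nonneg y), mul_nonneg hm0 hc.le]
    have h6 : (|x|+|y|)^2/(1-m^2)^2 ≤ ((2*x^2+2)/(1-m^2)^2)*(1+y^2) := by
      rw [div_mul_eq_mul_div, div_le_div_iff₀ (by positivity) (by positivity)]
      nlinarith [sq_nonneg ((1:ℝ)-m^2)]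
    calc _ ≤ ((2*x^2+2)/(1-m^2)^2)*(1+y^2) + (m/(1-m^2)^2) * (1+y^2) := by linarith
      _ = (((2*x^2+2)+m)/(1-m^2)^2) * (1+y^2) := by ring
  calc |DD x y t| = phi2 x y t * |(t*x - y)*(t*y - x)/(1-t^2)^2 + t/(1-t^2)| := by
        unfold DD
        rw [abs_mul, abs_of_nonneg (phi2_nonneg x y t)]
    _ ≤ (Real.exp (-((1-m)/2)*x^2) * Real.exp (-((1-m)/2)*y^2) / (2*Real.pi*Real.sqrt (1-m^2)))
        * ((|x|+|y|)^2/(1-m^2)^2 + m/(1-m^2)) := by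
        apply mul_le_mul (phi2_le hm1 ht x y) habs (abs_nonneg _) (by positivity)
    _ ≤ (1 * Real.exp (-((1-m)/2)*y^2) / (2*Real.pi*Real.sqrt (1-m^2)))
        * ((((2*x^2+2)+m)/(1-m^2)^2) * (1+y^2)) := by
        apply mul_le_mul _ key (by positivity) (by positivity)
        gcongr
        exact Real.exp_le_one_iff.mpr (by nlinarith [sq_nonneg x])
    _ = (((2*x^2+2)+m) / ((1-m^2)^2 * (2*Real.pi*Real.sqrt (1-m^2))))
        * ((1+y^2) * Real.exp (-((1-m)/2)*y^2)) := by
        field_simp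

lemma phi2_symm (x y r : ℝ) : phi2 x y r = phi2 y x r := by
  unfold phi2
  ring_nf

lemma phi2_canon (x r : ℝ) (hr : 0 < 1 - r^2) (y : ℝ) :
    phi2 x y r = ((2*Real.pi*Real.sqrt (1-r^2))⁻¹ + 0*y)
      * Real.exp ((-1/(2*(1-r^2)))*y^2 + (r*x/(1-r^2))*y + (-x^2/(2*(1-r^2)))) := by
  have hu : (1-r^2) ≠ 0 := ne_of_gt hr
  have harg : (-1/(2*(1-r^2)))*y^2 + (r*x/(1-r^2))*y + (-x^2/(2*(1-r^2)))
      = -(x^2 - 2*r*x*y + y^2)/(2*(1-r^2)) := by field_simp; ring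
  rw [harg]
  unfold phi2
  rw [zero_mul, add_zero, div_eq_mul_inv, mul_comm]

lemma PD_canon (x r : ℝ) (hr : 0 < 1 - r^2) (y : ℝ) :
    PD x y r = ((-x/((1-r^2)*(2*Real.pi*Real.sqrt (1-r^2))))
        + (r/((1-r^2)*(2*Real.pi*Real.sqrt (1-r^2))))*y)
      * Real.exp ((-1/(2*(1-r^2)))*y^2 + (r*x/(1-r^2))*y + (-x^2/(2*(1-r^2)))) := by
  have hu : (1-r^2) ≠ 0 := ne_of_gt hr
  have hS : Real.sqrt (1-r^2) ≠ 0 := ne_of_gt (Real.sqrt_pos.mpr hr)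
  have harg : (-1/(2*(1-r^2)))*y^2 + (r*x/(1-r^2))*y + (-x^2/(2*(1-r^2)))
      = -(x^2 - 2*r*x*y + y^2)/(2*(1-r^2)) := by field_simp; ring
  rw [harg]
  unfold PD phi2
  have hπ : Real.pi ≠ 0 := Real.pi_ne_zero
  field_simp
  ring

lemma negA {r : ℝ} (hr : 0 < 1 - r^2) : -1/(2*(1-r^2)) < 0 :=
  div_neg_of_neg_of_pos (by norm_num) (by positivity)

lemma phi2_tendsto_y (x r : ℝ) (hr : 0 < 1 - r^2) :
    Tendsto (fun y => phi2 x y r) atBot (𝓝 0) := by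
  have h := tendsto_linear_mul_exp_quad ((2*Real.pi*Real.sqrt (1-r^2))⁻¹) 0
    (-1/(2*(1-r^2))) (r*x/(1-r^2)) (-x^2/(2*(1-r^2))) (negA hr)
  exact h.congr fun y => (phi2_canon x r hr y).symm

lemma PD_tendsto_y (x r : ℝ) (hr : 0 < 1 - r^2) :
    Tendsto (fun y => PD x y r) atBot (𝓝 0) := by
  have h := tendsto_linear_mul_exp_quad (-x/((1-r^2)*(2*Real.pi*Real.sqrt (1-r^2))))
    (r/((1-r^2)*(2*Real.pi*Real.sqrt (1-r^2))))
    (-1/(2*(1-r^2))) (r*x/(1-r^2)) (-x^2/(2*(1-r^2))) (negA hr)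
  exact h.congr fun y => (PD_canon x r hr y).symm

lemma continuous_phi2_y (x r : ℝ) : Continuous (fun y => phi2 x y r) := by
  unfold phi2; fun_prop

lemma continuous_DD_y (x r : ℝ) : Continuous (fun y => DD x y r) := by
  unfold DD phi2; fun_prop

lemma continuous_PD_x (b r : ℝ) : Continuous (fun x => PD x b r) := by
  unfold PD phi2; fun_prop

lemma continuous_phi2_prod (r : ℝ) : Continuous (fun p : ℝ × ℝ => phi2 p.1 p.2 r) := by
  unfold phi2; fun_prop

lemma sq_lt_one_of_abs {r : ℝ} (hr : |r| < 1) : 0 < 1 - r^2 := by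
  nlinarith [sq_abs r, abs_nonneg r]

lemma integrable_phi2_y (x r : ℝ) (hr : |r| < 1) :
    Integrable (fun y => phi2 x y r) := by
  have hk : 0 < (1-|r|)/2 := by linarith
  apply Integrable.mono'
    ((integrable_exp_neg_mul_sq hk).const_mul
      (Real.exp (-((1-|r|)/2)*x^2) / (2*Real.pi*Real.sqrt (1-|r|^2))))
  · exact (continuous_phi2_y x r).aestronglyMeasurable
  · refine Eventually.of_forall fun y => ?_
    rw [Real.norm_eq_abs, abs_of_nonneg (phi2_nonneg x y r)]
    have := phi2_le hr le_rfl x y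
    calc phi2 x y r ≤ Real.exp (-((1-|r|)/2)*x^2) * Real.exp (-((1-|r|)/2)*y^2)
        / (2*Real.pi*Real.sqrt (1-|r|^2)) := this
      _ = Real.exp (-((1-|r|)/2)*x^2) / (2*Real.pi*Real.sqrt (1-|r|^2))
          * Real.exp (-((1-|r|)/2)*y^2) := by ring

lemma integrable_DD_y (x r : ℝ) (hr : |r| < 1) :
    Integrable (fun y => DD x y r) := by
  have hk : 0 < (1-|r|)/2 := by linarith
  apply Integrable.mono'
    ((integrable_one_add_sq_mul_exp hk).const_mul
      (((2*x^2+2)+|r|) / ((1-|r|^2)^2 * (2*Real.pi*Real.sqrt (1-|r|^2)))))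
  · exact (continuous_DD_y x r).aestronglyMeasurable
  · refine Eventually.of_forall fun y => ?_
    rw [Real.norm_eq_abs]
    exact DD_bound hr le_rfl x y

lemma integrable_PD_x (b r : ℝ) (hr : |r| < 1) :
    Integrable (fun x => PD x b r) := by
  have hk : 0 < (1-|r|)/2 := by linarith
  apply Integrable.mono'
    ((integrable_one_add_sq_mul_exp hk).const_mul
      ((|r| * |b| + 1) / ((1-|r|^2) * (2*Real.pi*Real.sqrt (1-|r|^2)))))
  · exact (continuous_PD_x b r).aestronglyMeasurable
  · refine Eventually.of_forall fun x => ?_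
    rw [Real.norm_eq_abs]
    exact PD_bound hr le_rfl x b

lemma inner_FTC (x b r : ℝ) (hr : |r| < 1) :
    ∫ y in Iic b, DD x y r = PD x b r := by
  have hu := sq_lt_one_of_abs hr
  have h := MeasureTheory.integral_Iic_of_hasDerivAt_of_tendsto'
    (f := fun y => PD x y r) (f' := fun y => DD x y r) (a := b) (m := 0)
    (fun y _ => hasDerivAt_PD_y x r hu y) (integrable_DD_y x r hr).integrableOn (PD_tendsto_y x r hu)
  simpa using h

lemma outer_FTC (a b r : ℝ) (hr : |r| < 1) :
    ∫ x in Iic a, PD x b r = phi2 a b r := by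
  have hu := sq_lt_one_of_abs hr
  have htd : Tendsto (fun x => phi2 x b r) atBot (𝓝 0) := by
    have := phi2_tendsto_y b r hu
    exact this.congr fun x => (phi2_symm b x r).symm ▸ rfl
  have h := MeasureTheory.integral_Iic_of_hasDerivAt_of_tendsto'
    (f := fun x => phi2 x b r) (f' := fun x => PD x b r) (a := a) (m := 0)
    (fun x _ => hasDerivAt_phi2_x b r hu x) (integrable_PD_x b r hr).integrableOn htd
  simpa using h

lemma ball_abs_le {r δ m t : ℝ} (hδ : δ = (1-|r|)/2) (hm : m = (1+|r|)/2)
    (htb : t ∈ Metric.ball r δ) : |t| ≤ m := by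
  have h := Metric.mem_ball.mp htb
  rw [Real.dist_eq] at h
  have : |t| ≤ |t - r| + |r| := by
    calc |t| = |t - r + r| := by ring_nf
      _ ≤ |t - r| + |r| := abs_add_le _ _
  subst hδ hm
  linarith

lemma inner_hasDerivAt (b x r : ℝ) (hr : |r| < 1) :
    HasDerivAt (fun t => ∫ y in Iic b, phi2 x y t) (PD x b r) r := by
  have hδ : (0:ℝ) < (1-|r|)/2 := by linarith
  have hm1 : (1+|r|)/2 < 1 := by linarith
  have hk : (0:ℝ) < (1-(1+|r|)/2)/2 := by linarith
  have hball : ∀ t ∈ Metric.ball r ((1-|r|)/2), |t| ≤ (1+|r|)/2 :=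
    fun t htb => ball_abs_le rfl rfl htb
  have key := hasDerivAt_integral_of_dominated_loc_of_deriv_le
    (μ := volume.restrict (Iic b))
    (F := fun t y => phi2 x y t) (F' := fun t y => DD x y t) (x₀ := r)
    (bound := fun y => (((2*x^2+2)+(1+|r|)/2) / ((1-((1+|r|)/2)^2)^2
        * (2*Real.pi*Real.sqrt (1-((1+|r|)/2)^2))))
      * ((1+y^2) * Real.exp (-((1-(1+|r|)/2)/2)*y^2)))
    (Metric.ball_mem_nhds _ hδ)
    (Eventually.of_forall fun t => ((continuous_phi2_y x t).aestronglyMeasurable).restrict)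
    (integrable_phi2_y x r hr).integrableOn
    ((continuous_DD_y x r).aestronglyMeasurable).restrict
    (Eventually.of_forall fun y t htb => by
      rw [Real.norm_eq_abs]
      exact DD_bound hm1 (hball t htb) x y)
    (((integrable_one_add_sq_mul_exp hk).const_mul _).integrableOn)
    (Eventually.of_forall fun y t htb => by
      have ht1 : |t| < 1 := lt_of_le_of_lt (hball t htb) hm1
      exact hasDerivAt_phi2_r x y t (sq_lt_one_of_abs ht1))
  rw [inner_FTC x b r hr] at key
  exact key.2

theorem plackett' (a b ρ : ℝ) (hρ : ρ ∈ Set.Ioo (-1 : ℝ) 1) :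
    HasDerivAt (fun r => ∫ x in Iic a, ∫ y in Iic b, phi2 x y r) (phi2 a b ρ) ρ := by
  have hρ1 : |ρ| < 1 := abs_lt.mpr ⟨hρ.1, hρ.2⟩
  have hδ : (0:ℝ) < (1-|ρ|)/2 := by linarith
  have hm1 : (1+|ρ|)/2 < 1 := by linarith
  have hk : (0:ℝ) < (1-(1+|ρ|)/2)/2 := by linarith
  have hk0 : (0:ℝ) < (1-|ρ|)/2 := hδ
  have hball : ∀ t ∈ Metric.ball ρ ((1-|ρ|)/2), |t| ≤ (1+|ρ|)/2 :=
    fun t htb => ball_abs_le rfl rfl htb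
  have hmeas : ∀ t : ℝ, AEStronglyMeasurable (fun x => ∫ y in Iic b, phi2 x y t)
      (volume.restrict (Iic a)) := by
    intro t
    exact (StronglyMeasurable.integral_prod_right' (f := fun p : ℝ × ℝ => phi2 p.1 p.2 t)
      (ν := volume.restrict (Iic b))
      ((continuous_phi2_prod t).stronglyMeasurable)).aestronglyMeasurable.restrict
  have hS0 : 0 < Real.sqrt (1-|ρ|^2) := Real.sqrt_pos.mpr (sq_lt_one_of_abs (by rwa [abs_abs]))
  have hFint : Integrable (fun x => ∫ y in Iic b, phi2 x y ρ) (volume.restrict (Iic a)) := by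
    apply Integrable.mono'
      (((integrable_exp_neg_mul_sq hk0).const_mul
        ((∫ y : ℝ, Real.exp (-((1-|ρ|)/2)*y^2)) / (2*Real.pi*Real.sqrt (1-|ρ|^2)))).integrableOn)
    · exact hmeas ρ
    · refine Eventually.of_forall fun x => ?_
      rw [Real.norm_eq_abs, abs_of_nonneg (integral_nonneg fun y => phi2_nonneg x y ρ)]
      have hint1 : Integrable (fun y : ℝ => Real.exp (-((1-|ρ|)/2)*y^2)) :=
        integrable_exp_neg_mul_sq hk0
      calc (∫ y in Iic b, phi2 x y ρ)
          ≤ ∫ y in Iic b, (Real.exp (-((1-|ρ|)/2)*x^2) / (2*Real.pi*Real.sqrt (1-|ρ|^2)))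
              * Real.exp (-((1-|ρ|)/2)*y^2) := by
            apply integral_mono (integrable_phi2_y x ρ hρ1).integrableOn
              ((hint1.const_mul _).integrableOn)
            intro y
            have := phi2_le hρ1 le_rfl x y
            calc phi2 x y ρ ≤ Real.exp (-((1-|ρ|)/2)*x^2) * Real.exp (-((1-|ρ|)/2)*y^2)
                / (2*Real.pi*Real.sqrt (1-|ρ|^2)) := this
              _ = Real.exp (-((1-|ρ|)/2)*x^2) / (2*Real.pi*Real.sqrt (1-|ρ|^2))
                  * Real.exp (-((1-|ρ|)/2)*y^2) := by ring
        _ = (Real.exp (-((1-|ρ|)/2)*x^2) / (2*Real.pi*Real.sqrt (1-|ρ|^2)))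
              * ∫ y in Iic b, Real.exp (-((1-|ρ|)/2)*y^2) := integral_const_mul _ _
        _ ≤ (Real.exp (-((1-|ρ|)/2)*x^2) / (2*Real.pi*Real.sqrt (1-|ρ|^2)))
              * ∫ y : ℝ, Real.exp (-((1-|ρ|)/2)*y^2) := by
            apply mul_le_mul_of_nonneg_left _ (by positivity)
            exact setIntegral_le_integral hint1
              (Eventually.of_forall fun y => (Real.exp_pos _).le)
        _ = (∫ y : ℝ, Real.exp (-((1-|ρ|)/2)*y^2)) / (2*Real.pi*Real.sqrt (1-|ρ|^2))
              * Real.exp (-((1-|ρ|)/2)*x^2) := by ring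
  have key := hasDerivAt_integral_of_dominated_loc_of_deriv_le
    (μ := volume.restrict (Iic a))
    (F := fun t x => ∫ y in Iic b, phi2 x y t) (F' := fun t x => PD x b t) (x₀ := ρ)
    (bound := fun x => (((1+|ρ|)/2*|b|+1) / ((1-((1+|ρ|)/2)^2)
        * (2*Real.pi*Real.sqrt (1-((1+|ρ|)/2)^2))))
      * ((1+x^2) * Real.exp (-((1-(1+|ρ|)/2)/2)*x^2)))
    (Metric.ball_mem_nhds _ hδ)
    (Eventually.of_forall hmeas)
    hFint
    ((continuous_PD_x b ρ).aestronglyMeasurable).restrict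
    (Eventually.of_forall fun x t htb => by
      rw [Real.norm_eq_abs]
      exact PD_bound hm1 (hball t htb) x b)
    (((integrable_one_add_sq_mul_exp hk).const_mul _).integrableOn)
    (Eventually.of_forall fun x t htb => by
      have ht1 : |t| < 1 := lt_of_le_of_lt (hball t htb) hm1
      exact inner_hasDerivAt b x t ht1)
  rw [outer_FTC a b ρ hρ1] at key
  exact key.2


end PlackettProof


/-- Plackett's identity. -/


theorem plackett (a b ρ : ℝ) (hρ : ρ ∈ Set.Ioo (-1 : ℝ) 1) :
    HasDerivAt (fun r => Phi2 a b r) (phi2 a b ρ) ρ := by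
  simp only [Phi2]
  exact plackett' a b ρ hρ
end

section
/- For fixed real thresholds a, b, the function ρ ↦ Φ₂(a,b;ρ) is strictly increasing on (−1,1), where Φ₂ is the standard bivariate normal CDF with correlation ρ. Consequently the joint tail probability P(X > a, Y > b) for a standard bivariate normal pair (X,Y) with correlation ρ is strictly increasing in ρ. -/
open Real MeasureTheory Set Matrix

open Filter Topology

section Aux

lemma phi_eq (x : ℝ) : phi x = Real.exp (-(1/2) * x^2) / Real.sqrt (2*Real.pi) := by
  unfold phi; ring_nf

lemma phi_pos (x : ℝ) : 0 < phi x :=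
  div_pos (Real.exp_pos _) (Real.sqrt_pos.2 (by positivity))

lemma phi_cont : Continuous phi := by
  unfold phi
  exact (Real.continuous_exp.comp (by continuity)).div_const _

lemma phi_le_one (t : ℝ) : phi t ≤ 1 := by
  unfold phi
  rw [div_le_one (Real.sqrt_pos.2 (by positivity))]
  have h1 : Real.exp (-t^2/2) ≤ 1 := Real.exp_le_one_iff.2 (by nlinarith [sq_nonneg t])
  have h2 : (1:ℝ) ≤ Real.sqrt (2*Real.pi) := by
    rw [show (1:ℝ) = Real.sqrt 1 by simp]
    exact Real.sqrt_le_sqrt (by nlinarith [Real.pi_gt_three])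
  linarith

lemma phi_integrable : Integrable phi := by
  have h : Integrable (fun x : ℝ => Real.exp (-(1/2) * x^2)) :=
    integrable_exp_neg_mul_sq (by norm_num)
  simpa only [← phi_eq] using h.div_const (Real.sqrt (2*Real.pi))

lemma integral_phi : ∫ x, phi x = 1 := by
  have h : ∫ x : ℝ, Real.exp (-(1/2) * x^2) = Real.sqrt (Real.pi / (1/2)) :=
    integral_gaussian (1/2)
  have : ∫ x, phi x = (∫ x : ℝ, Real.exp (-(1/2) * x^2)) / Real.sqrt (2*Real.pi) := by
    simp only [phi_eq]
    exact integral_div _ _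
  rw [this, h, show Real.pi / (1/2) = 2 * Real.pi by ring, div_self (by positivity)]

lemma Phi_nonneg (x : ℝ) : 0 ≤ Phi x :=
  integral_nonneg fun t => (phi_pos t).le

lemma Phi_le_one (x : ℝ) : Phi x ≤ 1 := by
  rw [← integral_phi]
  exact setIntegral_le_integral phi_integrable (ae_of_all _ fun t => (phi_pos t).le)

lemma Phi_hasDerivAt (x : ℝ) : HasDerivAt Phi (phi x) x := by
  have h : ∀ y : ℝ, Phi y = Phi 0 + ∫ t in (0:ℝ)..y, phi t := by
    intro y
    have := intervalIntegral.integral_Iic_sub_Iic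
      (phi_integrable.integrableOn (s := Set.Iic 0)) (phi_integrable.integrableOn (s := Set.Iic y))
    unfold Phi
    linarith [this]
  have hd : HasDerivAt (fun y => Phi 0 + ∫ t in (0:ℝ)..y, phi t) (phi x) x := by
    refine HasDerivAt.const_add _ ?_
    exact intervalIntegral.integral_hasDerivAt_right
      (phi_integrable.intervalIntegrable)
      (phi_cont.stronglyMeasurable.stronglyMeasurableAtFilter)
      phi_cont.continuousAt
  exact hd.congr_of_eventuallyEq (by filter_upwards with y using (h y))

lemma Phi_cont : Continuous Phi :=
  continuous_iff_continuousAt.2 fun x => (Phi_hasDerivAt x).continuousAt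

lemma Phi_tendsto_atBot : Tendsto Phi atBot (𝓝 0) := by
  have h : ∀ y : ℝ, Phi y = ∫ t, (Set.Iic y).indicator phi t := by
    intro y; rw [integral_indicator measurableSet_Iic]; rfl
  rw [show (0:ℝ) = ∫ (_ : ℝ), (0:ℝ) by simp]
  refine Tendsto.congr' (by filter_upwards with y using (h y).symm) ?_
  refine tendsto_integral_filter_of_dominated_convergence phi ?_ ?_ phi_integrable ?_
  · filter_upwards with y using
      (phi_cont.aestronglyMeasurable).indicator measurableSet_Iic
  · filter_upwards with y
    filter_upwards with t
    rw [Set.indicator_apply]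
    split_ifs
    · simp [abs_of_pos (phi_pos t), le_refl]
    · simp [(phi_pos t).le]
  · filter_upwards with t
    have : ∀ᶠ y in atBot, (Set.Iic y).indicator phi t = 0 := by
      filter_upwards [eventually_lt_atBot t] with y hy
      exact Set.indicator_of_notMem (by simpa using hy.not_ge) _
    exact Tendsto.congr' (this.mono fun y hy => hy.symm) tendsto_const_nhds

lemma sqrt_one_sub_sq_pos {ρ : ℝ} (h : ρ ∈ Set.Ioo (-1:ℝ) 1) : 0 < Real.sqrt (1 - ρ^2) := by
  apply Real.sqrt_pos.2; nlinarith [h.1, h.2]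

lemma one_sub_sq_pos {ρ : ℝ} (h : ρ ∈ Set.Ioo (-1:ℝ) 1) : 0 < 1 - ρ^2 := by
  nlinarith [h.1, h.2]

lemma phi2_factor {ρ : ℝ} (h : ρ ∈ Set.Ioo (-1:ℝ) 1) (x y : ℝ) :
    phi2 x y ρ = phi x * (phi ((y - ρ*x)/Real.sqrt (1-ρ^2)) / Real.sqrt (1-ρ^2)) := by
  have h1 : 0 < 1 - ρ^2 := one_sub_sq_pos h
  have hs : 0 < Real.sqrt (1-ρ^2) := sqrt_one_sub_sq_pos h
  set s := Real.sqrt (1-ρ^2)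
  have hsq : (Real.sqrt (1-ρ^2))^2 = 1 - ρ^2 := Real.sq_sqrt h1.le
  have h2pi : Real.sqrt (2*Real.pi) * Real.sqrt (2*Real.pi) = 2*Real.pi :=
    Real.mul_self_sqrt (by positivity)
  have hs' : s ≠ 0 := ne_of_gt hs
  have key : (-x^2/2) + (-((y - ρ*x)/Real.sqrt (1-ρ^2))^2/2) =
      -(x^2 - 2*ρ*x*y + y^2)/(2*(1-ρ^2)) := by
    rw [div_pow, hsq]
    field_simp
    ring
  unfold phi2 phi
  rw [div_div, div_mul_div_comm, ← Real.exp_add, key, ← mul_assoc, h2pi]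

lemma phi2_pos {ρ : ℝ} (h : ρ ∈ Set.Ioo (-1:ℝ) 1) (x y : ℝ) : 0 < phi2 x y ρ := by
  have := sqrt_one_sub_sq_pos h
  unfold phi2
  positivity

lemma phi2_even (x y ρ : ℝ) : phi2 (-x) (-y) ρ = phi2 x y ρ := by
  unfold phi2; ring_nf

lemma integrable_phi_affine {s : ℝ} (hs : 0 < s) (c : ℝ) :
    Integrable (fun y : ℝ => phi ((y - c)/s)) := by
  have h : Integrable (fun y : ℝ => Real.exp (-(1/(2*s^2)) * (y - c)^2)) :=
    (integrable_exp_neg_mul_sq (by positivity)).comp_sub_right c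
  have he : ∀ y : ℝ, phi ((y - c)/s) = Real.exp (-(1/(2*s^2)) * (y - c)^2) / Real.sqrt (2*Real.pi) := by
    intro y
    have harg : -((y - c)/s)^2/2 = -(1/(2*s^2))*(y-c)^2 := by
      rw [div_pow]; field_simp
    unfold phi
    rw [harg]
  simp only [he]
  exact h.div_const _

lemma inner_integral {ρ : ℝ} (h : ρ ∈ Set.Ioo (-1:ℝ) 1) (x b : ℝ) :
    ∫ y in Set.Iic b, phi2 x y ρ = phi x * Phi ((b - ρ*x)/Real.sqrt (1-ρ^2)) := by
  have hs : 0 < Real.sqrt (1-ρ^2) := sqrt_one_sub_sq_pos h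
  set s := Real.sqrt (1-ρ^2) with hs_def
  have key : ∫ y in Set.Iic b, phi2 x y ρ =
      (fun y => phi x * Phi ((y - ρ*x)/s)) b - 0 := by
    apply integral_Iic_of_hasDerivAt_of_tendsto'
    · intro y _
      have hinner : HasDerivAt (fun y : ℝ => (y - ρ*x)/s) (1/s) y := by
        simpa using ((hasDerivAt_id y).sub_const (ρ*x)).div_const s
      have := ((Phi_hasDerivAt ((y - ρ*x)/s)).comp y hinner).const_mul (phi x)
      refine this.congr_deriv (Eq.symm ?_)
      rw [phi2_factor h]
      ring
    · apply Integrable.integrableOn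
      have := ((integrable_phi_affine hs (ρ*x)).div_const s).const_mul (phi x)
      refine this.congr ?_
      filter_upwards with y
      rw [phi2_factor h]
    · have haff : Tendsto (fun y : ℝ => (y - ρ*x)/s) atBot atBot := by
        apply Tendsto.atBot_div_const hs
        exact tendsto_atBot_add_const_right _ _ tendsto_id
      have := (Phi_tendsto_atBot.comp haff).const_mul (phi x)
      simpa using this
  simpa using key

/-- the ρ-derivative of the integrand -/
noncomputable def gder (b ρ x : ℝ) : ℝ :=
  phi x * phi ((b - ρ*x)/Real.sqrt (1-ρ^2)) * ((ρ*b - x)/(Real.sqrt (1-ρ^2))^3)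

lemma scalar_deriv_eq {s x b ρ : ℝ} (hs : s ≠ 0) (hsq : s^2 = 1 - ρ^2) :
    ((-x) * s - (b - ρ*x) * (1/(2*s)*(-(2*ρ))))/s^2 = (ρ*b - x)/s^3 := by
  rw [div_eq_div_iff (pow_ne_zero 2 hs) (pow_ne_zero 3 hs)]
  field_simp
  linear_combination (-x) * hsq

lemma hasDerivAt_G (x b : ℝ) {ρ : ℝ} (h : ρ ∈ Set.Ioo (-1:ℝ) 1) :
    HasDerivAt (fun r => phi x * Phi ((b - r*x)/Real.sqrt (1-r^2))) (gder b ρ x) ρ := by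
  have h1 : 0 < 1 - ρ^2 := one_sub_sq_pos h
  have hs : 0 < Real.sqrt (1-ρ^2) := sqrt_one_sub_sq_pos h
  have hsq : (Real.sqrt (1-ρ^2))^2 = 1 - ρ^2 := Real.sq_sqrt h1.le
  have hv : HasDerivAt (fun r : ℝ => 1 - r^2) (-(2*ρ)) ρ := by
    simpa using ((hasDerivAt_pow 2 ρ).const_sub 1)
  have hw : HasDerivAt (fun r : ℝ => Real.sqrt (1 - r^2))
      (1/(2*Real.sqrt (1-ρ^2)) * (-(2*ρ))) ρ :=
    (Real.hasDerivAt_sqrt (ne_of_gt h1)).comp ρ hv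
  have hnum : HasDerivAt (fun r : ℝ => b - r*x) (-x) ρ := by
    simpa using ((hasDerivAt_id ρ).mul_const x).const_sub b
  have hu := hnum.div hw (ne_of_gt hs)
  have hfull := ((Phi_hasDerivAt ((b - ρ*x)/Real.sqrt (1-ρ^2))).comp ρ hu).const_mul (phi x)
  refine hfull.congr_deriv (Eq.symm ?_)
  unfold gder
  rw [← scalar_deriv_eq (ne_of_gt hs) hsq]
  ring

lemma integrable_weight (b : ℝ) : Integrable (fun x => phi x * (|b| + |x|)) := by
  have h2 : Integrable (fun x : ℝ => |x| * phi x) := by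
    have h := (integrable_mul_exp_neg_mul_sq (by norm_num : (0:ℝ) < 1/2)).abs
    have := h.div_const (Real.sqrt (2*Real.pi))
    refine this.congr ?_
    filter_upwards with x
    rw [phi_eq, abs_mul, abs_of_pos (Real.exp_pos _)]
    ring
  have := ((phi_integrable.const_mul |b|).add h2)
  refine this.congr ?_
  filter_upwards with x
  simp only [Pi.add_apply]
  ring

lemma ball_facts {ρ₀ ρ : ℝ} (h : ρ₀ ∈ Set.Ioo (-1:ℝ) 1)
    (hρ : ρ ∈ Metric.ball ρ₀ (min (1+ρ₀) (1-ρ₀) / 2)) :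
    ρ ∈ Set.Ioo (-1:ℝ) 1 ∧ (1-ρ₀^2)/4 ≤ 1 - ρ^2 := by
  have h1 := h.1
  have h2 := h.2
  rw [Metric.mem_ball, Real.dist_eq, abs_lt] at hρ
  have hm1 : min (1+ρ₀) (1-ρ₀) ≤ 1+ρ₀ := min_le_left _ _
  have hm2 : min (1+ρ₀) (1-ρ₀) ≤ 1-ρ₀ := min_le_right _ _
  constructor
  · constructor <;> nlinarith [hρ.1, hρ.2]
  · nlinarith [hρ.1, hρ.2]

lemma gder_bound {b ρ₀ ρ : ℝ} (h : ρ₀ ∈ Set.Ioo (-1:ℝ) 1)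
    (hρ : ρ ∈ Metric.ball ρ₀ (min (1+ρ₀) (1-ρ₀) / 2)) (x : ℝ) :
    ‖gder b ρ x‖ ≤ phi x * (|b| + |x|) * (1/(Real.sqrt ((1-ρ₀^2)/4))^3) := by
  obtain ⟨hρIoo, hδ⟩ := ball_facts h hρ
  have hδ0 : 0 < (1-ρ₀^2)/4 := by have := one_sub_sq_pos h; linarith
  have hsδ : 0 < Real.sqrt ((1-ρ₀^2)/4) := Real.sqrt_pos.2 hδ0
  have hs : 0 < Real.sqrt (1-ρ^2) := sqrt_one_sub_sq_pos hρIoo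
  have hsle : Real.sqrt ((1-ρ₀^2)/4) ≤ Real.sqrt (1-ρ^2) := Real.sqrt_le_sqrt hδ
  have hρ1 : |ρ| ≤ 1 := by
    rw [abs_le]; exact ⟨hρIoo.1.le, hρIoo.2.le⟩
  have hnum : |ρ*b - x| ≤ |b| + |x| := by
    calc |ρ*b - x| ≤ |ρ*b| + |x| := abs_sub _ _
    _ ≤ |b| + |x| := by
        rw [abs_mul]
        have : |ρ| * |b| ≤ 1 * |b| := by
          apply mul_le_mul_of_nonneg_right hρ1 (abs_nonneg _)
        linarith
  unfold gder
  rw [Real.norm_eq_abs, abs_mul, abs_mul, abs_div, abs_of_pos (phi_pos x),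
    abs_of_pos (phi_pos _), abs_of_pos (pow_pos hs 3)]
  have hphiu : phi ((b - ρ*x)/Real.sqrt (1-ρ^2)) ≤ 1 := phi_le_one _
  have hcube : (Real.sqrt ((1-ρ₀^2)/4))^3 ≤ (Real.sqrt (1-ρ^2))^3 := by
    gcongr
  have t1 : |ρ*b - x| / (Real.sqrt (1-ρ^2))^3
      ≤ (|b| + |x|) / (Real.sqrt ((1-ρ₀^2)/4))^3 :=
    div_le_div₀ (by positivity) hnum (pow_pos hsδ 3) hcube
  calc phi x * phi ((b - ρ*x)/Real.sqrt (1-ρ^2)) * (|ρ*b - x| / (Real.sqrt (1-ρ^2))^3)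
      ≤ phi x * 1 * ((|b| + |x|) / (Real.sqrt ((1-ρ₀^2)/4))^3) := by
        apply mul_le_mul
        · exact mul_le_mul_of_nonneg_left hphiu (phi_pos x).le
        · exact t1
        · positivity
        · exact mul_nonneg (phi_pos x).le zero_le_one
    _ = phi x * (|b| + |x|) * (1/(Real.sqrt ((1-ρ₀^2)/4))^3) := by ring

lemma gder_cont (b : ℝ) {ρ : ℝ} : Continuous (fun x => gder b ρ x) := by
  unfold gder
  refine ((phi_cont.mul (phi_cont.comp (by continuity))).mul (by continuity))

lemma hasDerivAt_F (a b : ℝ) {ρ₀ : ℝ} (h : ρ₀ ∈ Set.Ioo (-1:ℝ) 1) :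
    HasDerivAt (fun ρ => ∫ x in Set.Iic a, phi x * Phi ((b - ρ*x)/Real.sqrt (1-ρ^2)))
      (∫ x in Set.Iic a, gder b ρ₀ x) ρ₀ := by
  have hε : 0 < min (1+ρ₀) (1-ρ₀) / 2 := by
    have h1 := h.1; have h2 := h.2
    have : 0 < min (1+ρ₀) (1-ρ₀) := lt_min (by linarith) (by linarith)
    linarith
  refine (hasDerivAt_integral_of_dominated_loc_of_deriv_le
    (bound := fun x => phi x * (|b| + |x|) * (1/(Real.sqrt ((1-ρ₀^2)/4))^3)) (Metric.ball_mem_nhds ρ₀ hε) ?_ ?_ ?_ ?_ ?_ ?_).2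
  · filter_upwards with ρ
    exact ((phi_cont.mul (Phi_cont.comp (by continuity))).aestronglyMeasurable).restrict
  · apply Integrable.mono' (phi_integrable.restrict)
    · exact ((phi_cont.mul (Phi_cont.comp (by continuity))).aestronglyMeasurable).restrict
    · filter_upwards with x
      rw [Real.norm_eq_abs, abs_mul, abs_of_pos (phi_pos x)]
      calc phi x * |Phi ((b - ρ₀*x)/Real.sqrt (1-ρ₀^2))| ≤ phi x * 1 := by
            gcongr
            · exact (phi_pos x).le
            · rw [abs_le]; exact ⟨by linarith [Phi_nonneg ((b - ρ₀*x)/Real.sqrt (1-ρ₀^2))],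
                Phi_le_one _⟩
        _ = phi x := mul_one _
  · exact (gder_cont b).aestronglyMeasurable.restrict
  · filter_upwards with x
    intro ρ hρ
    exact gder_bound h hρ x
  · exact ((integrable_weight b).mul_const _).restrict
  · filter_upwards with x
    intro ρ hρ
    exact hasDerivAt_G x b (ball_facts h hρ).1

lemma tendsto_phi2_atBot (b : ℝ) {ρ : ℝ} (h : ρ ∈ Set.Ioo (-1:ℝ) 1) :
    Tendsto (fun x => phi2 x b ρ) atBot (𝓝 0) := by
  have h1 : 0 < 1 - ρ^2 := one_sub_sq_pos h
  have hP : Tendsto (fun x : ℝ => x^2 - 2*ρ*x*b + b^2) atBot atTop := by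
    have h1' : Tendsto (fun x : ℝ => x - ρ*b) atBot atBot :=
      tendsto_atBot_add_const_right _ _ tendsto_id
    have h2 : Tendsto (fun x : ℝ => |x - ρ*b|) atBot atTop :=
      tendsto_abs_atBot_atTop.comp h1'
    have h3 : Tendsto (fun x : ℝ => |x - ρ*b|^2) atBot atTop :=
      (tendsto_pow_atTop two_ne_zero).comp h2
    have h4 : Tendsto (fun x : ℝ => (x - ρ*b)^2 + (b^2 - ρ^2*b^2)) atBot atTop := by
      refine tendsto_atTop_add_const_right _ _ ?_
      refine h3.congr fun x => ?_
      rw [sq_abs]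
    refine h4.congr fun x => by ring
  have hq : Tendsto (fun x : ℝ => -(x^2 - 2*ρ*x*b + b^2)/(2*(1-ρ^2))) atBot atBot := by
    apply Tendsto.atBot_div_const (by linarith)
    exact tendsto_neg_atTop_atBot.comp hP
  have := (Real.tendsto_exp_atBot.comp hq).div_const (2*Real.pi*Real.sqrt (1-ρ^2))
  simpa [phi2] using this

lemma integral_gder (a b : ℝ) {ρ : ℝ} (h : ρ ∈ Set.Ioo (-1:ℝ) 1) :
    ∫ x in Set.Iic a, gder b ρ x = phi2 a b ρ := by
  have h1 : 0 < 1 - ρ^2 := one_sub_sq_pos h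
  have hs : 0 < Real.sqrt (1-ρ^2) := sqrt_one_sub_sq_pos h
  have hsq : (Real.sqrt (1-ρ^2))^2 = 1 - ρ^2 := Real.sq_sqrt h1.le
  have hder : ∀ x : ℝ, HasDerivAt (fun x => phi2 x b ρ) (gder b ρ x) x := by
    intro x
    have hq : HasDerivAt (fun x : ℝ => -(x^2 - 2*ρ*x*b + b^2)/(2*(1-ρ^2)))
        ((-(2*x - 2*ρ*b))/(2*(1-ρ^2))) x := by
      have hbase : HasDerivAt (fun x : ℝ => x^2 - 2*ρ*x*b + b^2) (2*x - 2*ρ*b) x := by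
        have := ((hasDerivAt_pow 2 x).sub
          (((hasDerivAt_id x).const_mul (2*ρ)).mul_const b)).add_const (b^2)
        simpa using this
      exact hbase.neg.div_const _
    have hexp := (hq.exp).div_const (2*Real.pi*Real.sqrt (1-ρ^2))
    have heq : (fun x => phi2 x b ρ) =
        fun x => Real.exp (-(x^2 - 2*ρ*x*b + b^2)/(2*(1-ρ^2))) / (2*Real.pi*Real.sqrt (1-ρ^2)) := by
      funext x; rfl
    rw [heq]
    refine hexp.congr_deriv (Eq.symm ?_)
    have hfac := phi2_factor h x b
    have hphi2 : phi2 x b ρ = Real.exp (-(x^2 - 2*ρ*x*b + b^2)/(2*(1-ρ^2)))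
        / (2*Real.pi*Real.sqrt (1-ρ^2)) := rfl
    rw [show Real.exp (-(x^2 - 2*ρ*x*b + b^2)/(2*(1-ρ^2))) * ((-(2*x - 2*ρ*b))/(2*(1-ρ^2)))
          / (2*Real.pi*Real.sqrt (1-ρ^2))
        = (Real.exp (-(x^2 - 2*ρ*x*b + b^2)/(2*(1-ρ^2))) / (2*Real.pi*Real.sqrt (1-ρ^2)))
          * ((-(2*x - 2*ρ*b))/(2*(1-ρ^2))) from by ring, ← hphi2, hfac]
    have hs' : Real.sqrt (1-ρ^2) ≠ 0 := ne_of_gt hs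
    have hscal : (ρ*b - x)/(Real.sqrt (1-ρ^2))^3
        = (1/Real.sqrt (1-ρ^2)) * ((-(2*x - 2*ρ*b))/(2*(1-ρ^2))) := by
      rw [pow_succ, hsq]
      field_simp
      ring
    unfold gder
    rw [hscal]
    ring
  have hε : (0:ℝ) < min (1+ρ) (1-ρ) / 2 := by
    have h1 := h.1; have h2 := h.2
    have : 0 < min (1+ρ) (1-ρ) := lt_min (by linarith) (by linarith)
    linarith
  have hint : Integrable (fun x => gder b ρ x) := by
    apply Integrable.mono' ((integrable_weight b).mul_const (1/(Real.sqrt ((1-ρ^2)/4))^3))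
    · exact (gder_cont b).aestronglyMeasurable
    · filter_upwards with x
      exact gder_bound h (Metric.mem_ball_self hε) x
  have key := integral_Iic_of_hasDerivAt_of_tendsto' (a := a)
    (fun x _ => hder x) hint.integrableOn (tendsto_phi2_atBot b h)
  simpa using key

lemma Phi2_eq (a b : ℝ) {ρ : ℝ} (h : ρ ∈ Set.Ioo (-1:ℝ) 1) :
    Phi2 a b ρ = ∫ x in Set.Iic a, phi x * Phi ((b - ρ*x)/Real.sqrt (1-ρ^2)) := by
  unfold Phi2
  exact integral_congr_ae (Filter.Eventually.of_forall fun x => inner_integral h x b)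

lemma Phi2_hasDerivAt (a b : ℝ) {ρ₀ : ℝ} (h : ρ₀ ∈ Set.Ioo (-1:ℝ) 1) :
    HasDerivAt (fun ρ => Phi2 a b ρ) (phi2 a b ρ₀) ρ₀ := by
  have hF := hasDerivAt_F a b h
  rw [integral_gder a b h] at hF
  apply hF.congr_of_eventuallyEq
  filter_upwards [isOpen_Ioo.mem_nhds h] with ρ hρ
  exact Phi2_eq a b hρ

lemma Phi2_strictMonoOn (a b : ℝ) :
    StrictMonoOn (fun ρ => Phi2 a b ρ) (Set.Ioo (-1 : ℝ) 1) := by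
  apply strictMonoOn_of_deriv_pos (convex_Ioo _ _)
  · intro ρ hρ
    exact (Phi2_hasDerivAt a b hρ).continuousAt.continuousWithinAt
  · intro ρ hρ
    rw [interior_Ioo] at hρ
    rw [(Phi2_hasDerivAt a b hρ).deriv]
    exact phi2_pos hρ a b

lemma PhiBar2_eq_Phi2 (a b ρ : ℝ) : PhiBar2 a b ρ = Phi2 (-a) (-b) ρ := by
  unfold PhiBar2 Phi2
  have inner : ∀ x : ℝ, (∫ y in Set.Ioi b, phi2 (-x) y ρ) = ∫ y in Set.Iic (-b), phi2 x y ρ := by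
    intro x
    rw [show (fun y => phi2 (-x) y ρ) = fun y => (fun t => phi2 x t ρ) (-y) from
      funext fun y => by simpa using phi2_even x (-y) ρ]
    simpa using integral_comp_neg_Ioi b (fun t => phi2 x t ρ)
  have outer : (∫ x in Set.Ioi a, ∫ y in Set.Ioi b, phi2 x y ρ)
      = ∫ x in Set.Iic (-a), ∫ y in Set.Ioi b, phi2 (-x) y ρ := by
    rw [← integral_comp_neg_Ioi a (fun x => ∫ y in Set.Ioi b, phi2 (-x) y ρ)]
    simp only [neg_neg]
  rw [outer]
  exact integral_congr_ae (Filter.Eventually.of_forall fun x => inner x)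

end Aux

/-- the bivariate normal CDF, and the joint tail probability, are strictly
increasing in the correlation. -/
theorem Phi2_strictMono_in_corr (a b : ℝ) :
    StrictMonoOn (fun ρ => Phi2 a b ρ) (Set.Ioo (-1 : ℝ) 1) ∧
    StrictMonoOn (fun ρ => PhiBar2 a b ρ) (Set.Ioo (-1 : ℝ) 1) := by
  constructor
  · exact Phi2_strictMonoOn a b
  · have : (fun ρ => PhiBar2 a b ρ) = fun ρ => Phi2 (-a) (-b) ρ :=
      funext fun ρ => PhiBar2_eq_Phi2 a b ρ
    rw [this]
    exact Phi2_strictMonoOn (-a) (-b)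
end
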